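/- For every a, b ∈ A_p and every state s ∈ {0, 1, ..., 1 + ⌊(p−2)/(p−q)⌋}, there is exactly one digit c ∈ A_p and one state s' ∈ {0, ..., 1 + ⌊(p−2)/(p−q)⌋} such that q·s + a + b = p·s' + c. -/
import Mathlib


/-- Base-p/q evaluation of a word over the digit alphabet, given as a list of
digits with the least-significant digit first:
`pqVal p q [a0, a1, ..., ak] = Σ (a_i / q) * (p/q)^i`. -/
def pqVal (p q : ℕ) : List ℕ → ℚ
  | [] => 0
  | a :: u => (a : ℚ) / q + ((p : ℚ) / q) * pqVal p q u

/-- `N_{p/q}`: the set of values of words over `A_p = {0, ..., p-1}`. -/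
def pqSet (p q : ℕ) : Set ℚ :=
  {x | ∃ u : List ℕ, (∀ a ∈ u, a < p) ∧ pqVal p q u = x}


/-- the carry automaton for base-p/q addition is deterministic
and complete: for all digits a, b < p and every state
s ≤ 1 + ⌊(p−2)/(p−q)⌋ there are exactly one digit c < p and one state
s' ≤ 1 + ⌊(p−2)/(p−q)⌋ with q·s + a + b = p·s' + c. -/
theorem stmt_17 (p q : ℕ) (hq : 1 < q) (hpq : q < p) (hcop : Nat.Coprime p q)
    (a b s : ℕ) (ha : a < p) (hb : b < p) (hs : s ≤ 1 + (p - 2) / (p - q)) :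
    ∃! sc : ℕ × ℕ, sc.1 ≤ 1 + (p - 2) / (p - q) ∧ sc.2 < p ∧
      q * s + a + b = p * sc.1 + sc.2 := by
  have hp : 0 < p := by omega
  set K := (p - 2) / (p - q) with hKdef
  have h1 : (p - q) * K + (p - 2) % (p - q) = p - 2 := Nat.div_add_mod _ _
  have h2 : (p - 2) % (p - q) < p - q := Nat.mod_lt _ (by omega)
  have hKb : (p - q) * K ≥ q - 1 := by
    generalize hm : (p - q) * K = m at h1 ⊢
    omega
  have hdist : (p - q) * K + q * K = p * K := by
    rw [← Nat.add_mul]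
    congr 1
    omega
  have hqs : q * s ≤ q + q * K := by
    calc q * s ≤ q * (1 + K) := Nat.mul_le_mul_left _ hs
    _ = q + q * K := by ring
  have hbound : (q * s + a + b) / p ≤ 1 + K := by
    have hlt : q * s + a + b < (2 + K) * p := by
      have hexp : (2 + K) * p = 2 * p + p * K := by ring
      have hkey : q * K + q ≤ p * K + 1 := by
        generalize h3 : q * K = x at hdist ⊢
        generalize h4 : p * K = y at hdist ⊢
        generalize h5 : (p - q) * K = m at hKb hdist
        omega
      rw [hexp]
      generalize h3 : q * K = x at hqs hkey
      generalize h4 : p * K = y at hkey ⊢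
      generalize h6 : q * s = w at hqs ⊢
      omega
    have := (Nat.div_lt_iff_lt_mul hp).mpr hlt
    omega
  refine ⟨((q * s + a + b) / p, (q * s + a + b) % p),
    ⟨hbound, Nat.mod_lt _ hp, (Nat.div_add_mod _ _).symm⟩, ?_⟩
  rintro ⟨y1, y2⟩ ⟨hy1, hy2, hy3⟩
  have e1 : y1 = (q * s + a + b) / p := by
    rw [hy3, Nat.mul_add_div hp, Nat.div_eq_of_lt hy2, Nat.add_zero]
  have e2 : y2 = (q * s + a + b) % p := by
    rw [hy3, Nat.mul_add_mod, Nat.mod_eq_of_lt hy2]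
  simp [e1, e2]
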